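/- Let H be a subgroup of a countable discrete group G, and let x be an element of the group von Neumann algebra L(G) that commutes with L(H). Then the support of x (the set of group elements with nonzero Fourier coefficient in the expansion x = ∑_g c_g u_g) is contained in the set of elements g ∈ G whose H-conjugacy class {tgt⁻¹ : t ∈ H} is finite. -/

import Mathlib

noncomputable section

/-- `ℓ²(G)` with complex coefficients. -/
abbrev L2 (G : Type*) := lp (fun _ : G => ℂ) 2

/-- If `x ∈ L(G)` (i.e. `x` commutes with the right regular representation `V`)
commutes with `L(H)` (i.e. with the left translations `U t`, `t ∈ H`), then the
support of the Fourier expansion of `x` (the coefficients being `x δ_e`) is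
contained in the set of `g ∈ G` whose `H`-conjugacy class is finite. -/
theorem support_subset_finite_conjugacy_of_commutes
    {G : Type*} [Group G] [Countable G] [DecidableEq G]
    (H : Subgroup G)
    (U V : G → (L2 G ≃ₗᵢ[ℂ] L2 G))
    (hU : ∀ t s : G, U t (lp.single 2 s (1 : ℂ)) = lp.single 2 (t * s) (1 : ℂ))
    (hV : ∀ t s : G, V t (lp.single 2 s (1 : ℂ)) = lp.single 2 (s * t⁻¹) (1 : ℂ))
    (x : L2 G →L[ℂ] L2 G)
    (hxLG : ∀ t : G, ∀ v : L2 G, x (V t v) = V t (x v))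
    (hxH : ∀ t ∈ H, ∀ v : L2 G, x (U t v) = U t (x v)) :
    {g : G | (x (lp.single 2 (1 : G) (1 : ℂ)) : ∀ _ : G, ℂ) g ≠ 0} ⊆
      {g : G | {y : G | ∃ t ∈ H, y = t * g * t⁻¹}.Finite} := by
  intro g hg
  set c : L2 G := x (lp.single 2 (1 : G) (1 : ℂ)) with hc
  -- coefficient extraction via inner product
  have coeff : ∀ y : G, (c : ∀ _ : G, ℂ) y = inner ℂ (lp.single 2 y (1 : ℂ)) c := by
    intro y
    rw [lp.inner_single_left]
    simp
  -- invariance of c under U t ∘ V t for t ∈ H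
  have hinv : ∀ t ∈ H, U t (V t c) = c := by
    intro t ht
    rw [hc, ← hxLG, ← hxH t ht, hV, hU]
    congr 1
    group
  -- coefficients constant on the H-conjugacy class
  have hconst : ∀ t ∈ H, (c : ∀ _ : G, ℂ) (t * g * t⁻¹) = (c : ∀ _ : G, ℂ) g := by
    intro t ht
    have h1 : (lp.single 2 (t * g * t⁻¹) (1 : ℂ) : L2 G)
        = U t (lp.single 2 (g * t⁻¹) (1 : ℂ)) := by
      rw [hU]; congr 1; group
    have h2 : (lp.single 2 (g * t⁻¹) (1 : ℂ) : L2 G)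
        = V t (lp.single 2 g (1 : ℂ)) := by rw [hV]
    calc (c : ∀ _ : G, ℂ) (t * g * t⁻¹)
        = inner ℂ (lp.single 2 (t * g * t⁻¹) (1 : ℂ) : L2 G) c := coeff _
      _ = inner ℂ (U t (lp.single 2 (g * t⁻¹) (1 : ℂ))) (U t (V t c)) := by
          rw [h1, hinv t ht]
      _ = inner ℂ (lp.single 2 (g * t⁻¹) (1 : ℂ) : L2 G) (V t c) := by
          rw [LinearIsometryEquiv.inner_map_map]
      _ = inner ℂ (V t (lp.single 2 g (1 : ℂ))) (V t c) := by rw [h2]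
      _ = inner ℂ (lp.single 2 g (1 : ℂ) : L2 G) c := by
          rw [LinearIsometryEquiv.inner_map_map]
      _ = (c : ∀ _ : G, ℂ) g := (coeff _).symm
  -- ℓ² summability
  have hs : Summable fun y : G => ‖(c : ∀ _ : G, ℂ) y‖ ^ (2 : ℝ) := by
    have := lp.memℓp c
    exact this.summable (by norm_num)
  have hpos : (0 : ℝ) < ‖(c : ∀ _ : G, ℂ) g‖ ^ (2 : ℝ) := by
    apply Real.rpow_pos_of_pos
    simpa using hg
  have hfin : {y : G | ¬ ‖(c : ∀ _ : G, ℂ) y‖ ^ (2 : ℝ) < ‖(c : ∀ _ : G, ℂ) g‖ ^ (2 : ℝ)}.Finite := by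
    have := hs.tendsto_cofinite_zero
    have hev : ∀ᶠ y in Filter.cofinite,
        ‖(c : ∀ _ : G, ℂ) y‖ ^ (2 : ℝ) < ‖(c : ∀ _ : G, ℂ) g‖ ^ (2 : ℝ) := by
      exact this.eventually_lt_const hpos
    simpa [Filter.eventually_cofinite] using hev
  apply hfin.subset
  rintro y ⟨t, ht, rfl⟩
  simp [hconst t ht]
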